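/- If u is a 1-balanced sequence over {a,b}, a = 1^ω is the constant sequence on letter 1, and b is a 1-balanced sequence over {2,3}, then the ternary sequence v = colour(u, a, b) is 2-balanced: for any two factors U, V of v of the same length and each letter c ∈ {1,2,3}, we have ||U|_c − |V|_c| ≤ 2. -/

import Mathlib

/-- The factor of length `n` of the sequence `s` starting at position `i`. -/
def fac {A : Type*} (s : ℕ → A) (i n : ℕ) : List A :=
  (List.range n).map (fun j => s (i + j))

/-- A sequence is `C`-balanced if any two factors of the same length have numbers of
occurrences of each letter differing by at most `C`. -/
def IsBalanced {A : Type*} [DecidableEq A] (C : ℕ) (s : ℕ → A) : Prop :=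
  ∀ i j n : ℕ, ∀ c : A,
    |((fac s i n).count c : ℤ) - ((fac s j n).count c : ℤ)| ≤ C

/-- Number of positions `k < n` with `u k = true` (letter `b`). -/
def countB (u : ℕ → Bool) (n : ℕ) : ℕ :=
  ((Finset.range n).filter (fun k => u k = true)).card

/-- Number of positions `k < n` with `u k = false` (letter `a`). -/
def countA (u : ℕ → Bool) (n : ℕ) : ℕ :=
  ((Finset.range n).filter (fun k => u k = false)).card

/-- Colouring of a binary sequence `u` (`false` = letter a, `true` = letter b)
by sequences `a` and `b`. -/
def colour {A : Type*} (u : ℕ → Bool) (a b : ℕ → A) (n : ℕ) : A :=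
  if u n then b (countB u n) else a (countA u n)

lemma fac_succ {A : Type*} (s : ℕ → A) (i n : ℕ) :
    fac s i (n+1) = fac s i n ++ [s (i+n)] := by
  simp [fac, List.range_succ]

lemma countB_succ (u : ℕ → Bool) (m : ℕ) :
    countB u (m+1) = countB u m + (if u m then 1 else 0) := by
  unfold countB
  rw [Finset.range_add_one, Finset.filter_insert]
  split
  · rw [Finset.card_insert_of_notMem (by simp)]
  · rfl

lemma countB_eq (u : ℕ → Bool) (i n : ℕ) :
    countB u (i+n) = countB u i + (fac u i n).count true := by
  induction n with
  | zero => simp [fac]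
  | succ n ih =>
      rw [← Nat.add_assoc, countB_succ, ih, fac_succ]
      simp [List.count_append]
      split <;> simp_all <;> omega

lemma key (u : ℕ → Bool) (b : ℕ → ℕ) (c : ℕ) (hc : c ≠ 1) (i n : ℕ) :
    (fac (colour u (fun _ => 1) b) i n).count c
      = (fac b (countB u i) ((fac u i n).count true)).count c := by
  induction n with
  | zero => simp [fac]
  | succ n ih =>
      rw [fac_succ, List.count_append, ih]
      by_cases h : u (i+n)
      · have h1 : colour u (fun _ => 1) b (i+n) = b (countB u (i+n)) := by
          simp [colour, h]
        have hcount : (fac u i (n+1)).count true = (fac u i n).count true + 1 := by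
          rw [fac_succ]; simp [List.count_append, h]
        rw [h1, hcount, fac_succ, List.count_append, countB_eq]
      · have h1 : colour u (fun _ => 1) b (i+n) = 1 := by simp [colour, h]
        have hcount : (fac u i (n+1)).count true = (fac u i n).count true := by
          rw [fac_succ]; simp [List.count_append, h]
        rw [hcount, h1]
        simp [List.count_singleton', Ne.symm hc]

lemma key1 (u : ℕ → Bool) (b : ℕ → ℕ) (hbrange : ∀ n, b n = 2 ∨ b n = 3) (i n : ℕ) :
    (fac (colour u (fun _ => 1) b) i n).count 1 + (fac u i n).count true = n := by
  induction n with
  | zero => simp [fac]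
  | succ n ih =>
      rw [fac_succ, fac_succ, List.count_append, List.count_append]
      by_cases h : u (i+n)
      · have h1 : colour u (fun _ => 1) b (i+n) = b (countB u (i+n)) := by
          simp [colour, h]
        have h2 : List.count 1 [b (countB u (i+n))] = 0 := by
          rcases hbrange (countB u (i+n)) with h'|h' <;> simp [h']
        rw [h1, h2]
        simp [h]
        omega
      · have h1 : colour u (fun _ => 1) b (i+n) = 1 := by simp [colour, h]
        rw [h1]
        simp [h]
        omega

lemma count_fac_succ (b : ℕ → ℕ) (p m c : ℕ) :
    (fac b p m).count c ≤ (fac b p (m+1)).count c ∧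
    (fac b p (m+1)).count c ≤ (fac b p m).count c + 1 := by
  rw [fac_succ, List.count_append]
  have h := List.count_le_length (a := c) (l := [b (p+m)])
  simp at h
  omega

lemma balD (b : ℕ → ℕ) (hb : IsBalanced 1 b) (p q m m' c : ℕ)
    (h : |(m:ℤ) - (m':ℤ)| ≤ 1) :
    |((fac b p m).count c : ℤ) - ((fac b q m').count c : ℤ)| ≤ 2 := by
  have hcase : m' = m ∨ m' = m + 1 ∨ m = m' + 1 := by rw [abs_le] at h; omega
  rcases hcase with rfl | rfl | rfl
  · have h1 := hb p q m' c
    rw [abs_le] at h1 ⊢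
    push_cast at h1 ⊢
    omega
  · have h1 := hb p q m c
    have h2 := count_fac_succ b q m c
    rw [abs_le] at h1 ⊢
    push_cast at h1 ⊢
    omega
  · have h1 := hb p q m' c
    have h2 := count_fac_succ b p m' c
    rw [abs_le] at h1 ⊢
    push_cast at h1 ⊢
    omega

theorem stmt_1 (u : ℕ → Bool) (b : ℕ → ℕ)
    (hu : IsBalanced 1 u)
    (hbrange : ∀ n, b n = 2 ∨ b n = 3)
    (hb : IsBalanced 1 b) :
    IsBalanced 2 (colour u (fun _ => 1) b) := by
  intro i j n c
  have hm := hu i j n true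
  by_cases hc : c = 1
  · subst hc
    have h1 := key1 u b hbrange i n
    have h2 := key1 u b hbrange j n
    rw [abs_le] at hm ⊢
    push_cast at hm ⊢
    omega
  · rw [key u b c hc i n, key u b c hc j n]
    exact balD b hb _ _ _ _ c (by push_cast at hm ⊢; exact hm)
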